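/- Let n ≥ 2 be even, n = 2k, and let β_q be the coefficient of t^q in the power series (1-t^{4k})/((1-t²)(1-t^{4k-2})). Then β_q = 2 if q ∈ {2j(n-1) : j ∈ ℕ}, β_q = 1 if q is a nonnegative even integer not of the form 2j(n-1) with j ≥ 1, and β_q = 0 otherwise; moreover lim_{q→∞} (1/q) ∑_{j=0}^{q} (-1)^j β_j = n/(2(n-1)). -/

import Mathlib

open scoped Classical

open PowerSeries Filter

private lemma geom_aux (d : ℕ) (hd : 0 < d) :
    (PowerSeries.mk fun q => if d ∣ q then (1 : ℚ) else 0) * (1 - X ^ d) = 1 := by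
  ext q
  simp only [mul_sub, mul_one, map_sub, PowerSeries.coeff_mul_X_pow', PowerSeries.coeff_mk,
    PowerSeries.coeff_one]
  rcases Nat.lt_or_ge q d with h | h
  · rw [if_neg (by omega : ¬ d ≤ q)]
    rcases Nat.eq_zero_or_pos q with rfl | hq
    · rw [if_pos (dvd_zero d), if_pos rfl]; ring
    · rw [if_neg (fun hdvd => absurd (Nat.le_of_dvd hq hdvd) (by omega)),
        if_neg (by omega : ¬ q = 0)]
      ring
  · have key : d ∣ q ↔ d ∣ q - d := by
      constructor
      · exact fun h1 => Nat.dvd_sub h1 dvd_rfl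
      · intro h1
        have h2 := Nat.dvd_add h1 (dvd_refl d)
        rwa [Nat.sub_add_cancel h] at h2
    rw [if_pos h, if_neg (by omega : ¬ q = 0)]
    by_cases hdvd : d ∣ q
    · rw [if_pos hdvd, if_pos (key.mp hdvd)]; ring
    · rw [if_neg hdvd, if_neg (fun h1 => hdvd (key.mpr h1))]; ring

private lemma count_aux (d q : ℕ) (hd : 0 < d) :
    (∑ j ∈ Finset.range (q + 1), if d ∣ j then (1 : ℝ) else 0) = ((q / d : ℕ) : ℝ) + 1 := by
  induction q with
  | zero => rw [Finset.sum_range_one, if_pos (dvd_zero d)]; norm_num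
  | succ q ih =>
      rw [Finset.sum_range_succ, ih, Nat.succ_div]
      by_cases h : d ∣ q + 1
      · rw [if_pos h, if_pos h]; push_cast; ring
      · rw [if_neg h, if_neg h]; push_cast; ring

private lemma div_tendsto_aux (d : ℕ) (hd : 0 < d) :
    Tendsto (fun q : ℕ => ((q / d : ℕ) : ℝ) / q) atTop (nhds (1 / d)) := by
  have h0 : Tendsto (fun q : ℕ => ((q / d : ℕ) : ℝ) / q - 1 / d) atTop (nhds 0) := by
    refine squeeze_zero_norm' ?_ tendsto_one_div_atTop_nhds_zero_nat
    filter_upwards [eventually_ge_atTop 1] with q hq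
    have hq0 : (0 : ℝ) < q := by exact_mod_cast hq
    have hd0 : (0 : ℝ) < d := by exact_mod_cast hd
    have hmod : ((q / d : ℕ) : ℝ) = ((q : ℝ) - (q % d : ℕ)) / d := by
      rw [eq_div_iff hd0.ne']
      have h1 : d * (q / d) + q % d = q := Nat.div_add_mod q d
      have h2 : ((d * (q / d) + q % d : ℕ) : ℝ) = (q : ℝ) := by exact_mod_cast h1
      push_cast at h2
      linarith
    have hrlt : ((q % d : ℕ) : ℝ) < d := by exact_mod_cast Nat.mod_lt q hd
    have hr0 : (0 : ℝ) ≤ ((q % d : ℕ) : ℝ) := by positivity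
    rw [hmod, Real.norm_eq_abs]
    have hexp : ((q : ℝ) - (q % d : ℕ)) / d / q - 1 / d = -(((q % d : ℕ) : ℝ) / (d * q)) := by
      field_simp
      ring
    rw [hexp, abs_neg, abs_of_nonneg (by positivity),
      div_le_div_iff₀ (by positivity) (by positivity)]
    nlinarith
  have h1 := h0.add (tendsto_const_nhds : Tendsto (fun _ : ℕ => (1 : ℝ) / d) atTop (nhds (1 / d)))
  simpa using h1

theorem poincare_series_even (n k : ℕ) (hk : 1 ≤ k) (hn : n = 2 * k)
    (P : PowerSeries ℚ)
    (hP : P * ((1 - X ^ 2) * (1 - X ^ (4 * k - 2))) = 1 - X ^ (4 * k)) :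
    (∀ q : ℕ, (PowerSeries.coeff q) P =
      if ∃ j : ℕ, 1 ≤ j ∧ q = 2 * j * (n - 1) then 2
      else if Even q then 1 else 0) ∧
    Tendsto (fun q : ℕ =>
        (∑ j ∈ Finset.range (q + 1), (-1 : ℝ) ^ j * ((PowerSeries.coeff (R := ℚ) j) P : ℝ)) / q)
      atTop (nhds (n / (2 * (n - 1)) : ℝ)) := by
  set d := 4 * k - 2 with hdd
  have hd2 : 0 < d := by omega
  have hdeven : 2 ∣ d := ⟨2 * k - 1, by omega⟩
  have h2dvd : ∀ m : ℕ, 2 ∣ m ↔ Even m := by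
    intro m; rw [Nat.even_iff]; omega
  set E := PowerSeries.mk fun q => if 2 ∣ q then (1 : ℚ) else 0 with hEdef
  set F := PowerSeries.mk fun q => if d ∣ q then (1 : ℚ) else 0 with hFdef
  have hE : E * (1 - X ^ 2) = 1 := geom_aux 2 (by norm_num)
  have hF : F * (1 - X ^ d) = 1 := geom_aux d hd2
  have hB : (E + F - 1) * ((1 - X ^ 2) * (1 - X ^ d)) = 1 - X ^ (4 * k) := by
    calc (E + F - 1) * ((1 - X ^ 2) * (1 - X ^ d))
        = (E * (1 - X ^ 2)) * (1 - X ^ d) + (F * (1 - X ^ d)) * (1 - X ^ 2)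
          - (1 - X ^ 2) * (1 - X ^ d) := by ring
      _ = 1 * (1 - X ^ d) + 1 * (1 - X ^ 2) - (1 - X ^ 2) * (1 - X ^ d) := by rw [hE, hF]
      _ = 1 - X ^ 2 * X ^ d := by ring
      _ = 1 - X ^ (4 * k) := by rw [← pow_add]; congr 2; omega
  have hDne : ((1 - X ^ 2) * (1 - X ^ d) : PowerSeries ℚ) ≠ 0 := by
    intro h
    have h2 := congrArg (PowerSeries.constantCoeff (R := ℚ)) h
    simp [zero_pow (by omega : d ≠ 0)] at h2
  have hPB : P = E + F - 1 := mul_right_cancel₀ hDne (hP.trans hB.symm)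
  have hcoeff : ∀ q : ℕ, (PowerSeries.coeff (R := ℚ) q) P =
      (if 2 ∣ q then (1 : ℚ) else 0) + (if d ∣ q then 1 else 0)
        - (if q = 0 then 1 else 0) := by
    intro q
    rw [hPB]
    simp [hEdef, hFdef, PowerSeries.coeff_one]
  have hmul : ∀ j : ℕ, 2 * j * (n - 1) = j * d := by
    intro j
    have h1 : n - 1 = 2 * k - 1 := by omega
    have h2 : d = 2 * (2 * k - 1) := by omega
    rw [h1, h2]; ring
  have hiff : ∀ q : ℕ, (∃ j : ℕ, 1 ≤ j ∧ q = 2 * j * (n - 1)) ↔ d ∣ q ∧ q ≠ 0 := by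
    intro q
    constructor
    · rintro ⟨j, hj1, rfl⟩
      rw [hmul j]
      exact ⟨dvd_mul_left d j, Nat.mul_ne_zero (by omega) (by omega)⟩
    · rintro ⟨⟨m, rfl⟩, hq⟩
      refine ⟨m, ?_, by rw [hmul m]; ring⟩
      rcases Nat.eq_zero_or_pos m with rfl | h
      · simp at hq
      · exact h
  have hfor : ∀ q : ℕ, (PowerSeries.coeff (R := ℚ) q) P =
      if ∃ j : ℕ, 1 ≤ j ∧ q = 2 * j * (n - 1) then 2
      else if Even q then 1 else 0 := by
    intro q
    rw [hcoeff q]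
    by_cases h1 : d ∣ q ∧ q ≠ 0
    · rw [if_pos ((hiff q).mpr h1), if_pos (dvd_trans hdeven h1.1), if_pos h1.1, if_neg h1.2]
      norm_num
    · rw [if_neg (fun h => h1 ((hiff q).mp h))]
      rcases eq_or_ne q 0 with rfl | hq
      · rw [if_pos (dvd_zero 2), if_pos (dvd_zero d), if_pos rfl, if_pos Even.zero]
        norm_num
      · have hnd : ¬ d ∣ q := fun h => h1 ⟨h, hq⟩
        rw [if_neg hnd, if_neg hq]
        by_cases h2 : Even q
        · rw [if_pos ((h2dvd q).mpr h2), if_pos h2]; norm_num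
        · rw [if_neg (fun h => h2 ((h2dvd q).mp h)), if_neg h2]; norm_num
  refine ⟨hfor, ?_⟩
  have hterm : ∀ j : ℕ, (-1 : ℝ) ^ j * ((PowerSeries.coeff (R := ℚ) j) P : ℝ) =
      (if 2 ∣ j then (1 : ℝ) else 0) + (if d ∣ j then 1 else 0)
        - (if j = 0 then 1 else 0) := by
    intro j
    rw [hcoeff j]
    by_cases h2 : 2 ∣ j
    · rw [Even.neg_one_pow ((h2dvd j).mp h2)]
      push_cast
      split_ifs <;> norm_num
    · have hnd : ¬ d ∣ j := fun h => h2 (dvd_trans hdeven h)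
      have hj0 : j ≠ 0 := by rintro rfl; exact h2 ⟨0, rfl⟩
      rw [if_neg h2, if_neg hnd, if_neg hj0, if_neg h2, if_neg hnd, if_neg hj0]
      norm_num
  have hsum : ∀ q : ℕ,
      (∑ j ∈ Finset.range (q + 1), (-1 : ℝ) ^ j * ((PowerSeries.coeff (R := ℚ) j) P : ℝ))
        = ((q / 2 : ℕ) : ℝ) + ((q / d : ℕ) : ℝ) + 1 := by
    intro q
    simp only [hterm]
    rw [Finset.sum_sub_distrib, Finset.sum_add_distrib, count_aux 2 q (by norm_num),
      count_aux d q hd2]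
    have h3 : (∑ j ∈ Finset.range (q + 1), if j = 0 then (1 : ℝ) else 0) = 1 := by
      rw [Finset.sum_ite_eq' (Finset.range (q + 1)) 0 (fun _ => (1 : ℝ))]
      simp
    rw [h3]
    ring
  have hlim : Tendsto (fun q : ℕ =>
      (((q / 2 : ℕ) : ℝ) + ((q / d : ℕ) : ℝ) + 1) / q) atTop
      (nhds ((1 : ℝ) / 2 + 1 / d + 0)) := by
    have h1 := div_tendsto_aux 2 (by norm_num)
    have h2 := div_tendsto_aux d hd2
    have h3 : Tendsto (fun q : ℕ => (1 : ℝ) / q) atTop (nhds 0) :=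
      tendsto_one_div_atTop_nhds_zero_nat
    refine ((h1.add h2).add h3).congr fun q => ?_
    push_cast
    ring
  have hval : ((1 : ℝ) / 2 + 1 / d + 0) = (n / (2 * (n - 1)) : ℝ) := by
    have hd0 : (d : ℝ) = 4 * k - 2 := by
      rw [hdd, Nat.cast_sub (by omega : 2 ≤ 4 * k)]
      push_cast; ring
    have hn1 : (n : ℝ) = 2 * k := by exact_mod_cast congrArg Nat.cast hn
    have hkpos : (1 : ℝ) ≤ k := by exact_mod_cast hk
    rw [hd0, hn1]
    have ha : (4 : ℝ) * k - 2 ≠ 0 := by nlinarith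
    have hb : (2 : ℝ) * (2 * k - 1) ≠ 0 := by nlinarith
    have hc : (2 : ℝ) * k - 1 ≠ 0 := by nlinarith
    field_simp
    ring
  rw [← hval]
  exact hlim.congr fun q => by rw [hsum q]
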